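/- Let p ≥ 1, n ≥ 1, G > 0, λ > 0, let W ⊆ ℝ^p be closed and convex, let J ⊆ {1,…,p}, and let ℓ : ℝ^p × X → ℝ be convex and G-Lipschitz in its first argument. For a dataset T = (ξ_1,…,ξ_n) ∈ X^n write F_T(w) = (1/n)Σ_{i=1}^n ℓ(w;ξ_i). Let S, S' ∈ X^n differ in exactly one coordinate, and suppose w₁ minimizes F_S(w) + (λ/2)‖w‖² over K := {w ∈ W : supp(w) ⊆ J} and w₂ minimizes F_{S'}(w) + (λ/2)‖w‖² over K. Then ‖w₁ − w₂‖ ≤ 4G/(λn), and consequently |ℓ(w₁;ξ) − ℓ(w₂;ξ)| ≤ 4G²/(λn) for every ξ ∈ X. -/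
import Mathlib


open Set

noncomputable section

abbrev Vec (p : ℕ) := EuclideanSpace ℝ (Fin p)

def spt {p : ℕ} (w : Vec p) : Set (Fin p) := {i | w i ≠ 0}

/-- G-Lipschitz continuity of the loss in its first argument -/
def LipLoss {p : ℕ} {X : Type*} (G : ℝ) (loss : Vec p → X → ℝ) : Prop :=
  ∀ w w' ξ, |loss w ξ - loss w' ξ| ≤ G * ‖w - w'‖

/-- empirical risk of the dataset T -/
def emp {p : ℕ} {X : Type*} (loss : Vec p → X → ℝ) {n : ℕ} (T : Fin n → X)
    (w : Vec p) : ℝ := (n : ℝ)⁻¹ * ∑ i, loss w (T i)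

lemma key {p n : ℕ} {lam : ℝ} {X : Type*}
    {W : Set (Vec p)} (hWconv : Convex ℝ W) {J : Set (Fin p)}
    {loss : Vec p → X → ℝ}
    (hconv : ∀ ξ, ConvexOn ℝ Set.univ fun w => loss w ξ)
    (T : Fin n → X) (a b : Vec p)
    (ha : a ∈ W) (haspt : spt a ⊆ J) (hb : b ∈ W) (hbspt : spt b ⊆ J)
    (hmin : ∀ u ∈ W, spt u ⊆ J →
      emp loss T a + lam / 2 * ‖a‖ ^ 2 ≤ emp loss T u + lam / 2 * ‖u‖ ^ 2) :
    lam / 4 * ‖a - b‖ ^ 2 ≤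
      (emp loss T b + lam / 2 * ‖b‖ ^ 2) - (emp loss T a + lam / 2 * ‖a‖ ^ 2) := by
  set m : Vec p := (1/2 : ℝ) • a + (1/2 : ℝ) • b with hm
  have hmW : m ∈ W := hWconv ha hb (by norm_num) (by norm_num) (by norm_num)
  have hmspt : spt m ⊆ J := by
    intro i hi
    by_contra hiJ
    have ha0 : a i = 0 := by by_contra h; exact hiJ (haspt h)
    have hb0 : b i = 0 := by by_contra h; exact hiJ (hbspt h)
    exact hi (by simp [hm, PiLp.add_apply, PiLp.smul_apply, ha0, hb0])
  have h1 := hmin m hmW hmspt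
  have hm2 : ‖m‖ ^ 2 = ‖a + b‖ ^ 2 / 4 := by
    have h : m = (1/2 : ℝ) • (a + b) := by rw [hm, smul_add]
    rw [h, norm_smul]
    simp [Real.norm_eq_abs]
    ring
  have hpar := parallelogram_law_with_norm ℝ a b
  have hnorm : ‖m‖ ^ 2 = 1/2 * ‖a‖ ^ 2 + 1/2 * ‖b‖ ^ 2 - 1/4 * ‖a - b‖ ^ 2 := by
    rw [hm2]; nlinarith [hpar]
  have hsum : ∑ i, loss m (T i) ≤ ∑ i, (1/2 * loss a (T i) + 1/2 * loss b (T i)) :=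
    Finset.sum_le_sum fun i _ =>
      (hconv (T i)).2 (mem_univ a) (mem_univ b) (by norm_num) (by norm_num) (by norm_num)
  have hemp : emp loss T m ≤ 1/2 * emp loss T a + 1/2 * emp loss T b := by
    unfold emp
    calc (n : ℝ)⁻¹ * ∑ i, loss m (T i)
        ≤ (n : ℝ)⁻¹ * ∑ i, (1/2 * loss a (T i) + 1/2 * loss b (T i)) :=
          mul_le_mul_of_nonneg_left hsum (by positivity)
      _ = 1/2 * ((n : ℝ)⁻¹ * ∑ i, loss a (T i)) + 1/2 * ((n : ℝ)⁻¹ * ∑ i, loss b (T i)) := by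
          rw [Finset.sum_add_distrib, ← Finset.mul_sum, ← Finset.mul_sum]; ring
  have h2 : lam / 2 * ‖m‖ ^ 2 =
      lam / 4 * ‖a‖ ^ 2 + lam / 4 * ‖b‖ ^ 2 - lam / 8 * ‖a - b‖ ^ 2 := by
    rw [hnorm]; ring
  linarith

/-- uniform stability of the ℓ₂-regularized empirical risk minimizer
restricted to a fixed index set J, for datasets differing in a single element. -/
theorem stmt12 {p n : ℕ} (hp : 1 ≤ p) (hn : 1 ≤ n) {G lam : ℝ} (hG : 0 < G)
    (hlam : 0 < lam) {X : Type*}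
    (W : Set (Vec p)) (hWclosed : IsClosed W) (hWconv : Convex ℝ W)
    (J : Set (Fin p))
    (loss : Vec p → X → ℝ)
    (hconv : ∀ ξ, ConvexOn ℝ Set.univ fun w => loss w ξ)
    (hlip : LipLoss G loss)
    (S S' : Fin n → X) (i₀ : Fin n) (hne : S i₀ ≠ S' i₀)
    (hagree : ∀ i, i ≠ i₀ → S i = S' i)
    (w₁ w₂ : Vec p)
    (hw₁mem : w₁ ∈ W) (hw₁spt : spt w₁ ⊆ J)
    (hw₁min : ∀ u ∈ W, spt u ⊆ J →
      emp loss S w₁ + lam / 2 * ‖w₁‖ ^ 2 ≤ emp loss S u + lam / 2 * ‖u‖ ^ 2)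
    (hw₂mem : w₂ ∈ W) (hw₂spt : spt w₂ ⊆ J)
    (hw₂min : ∀ u ∈ W, spt u ⊆ J →
      emp loss S' w₂ + lam / 2 * ‖w₂‖ ^ 2 ≤ emp loss S' u + lam / 2 * ‖u‖ ^ 2) :
    ‖w₁ - w₂‖ ≤ 4 * G / (lam * n)
      ∧ ∀ ξ : X, |loss w₁ ξ - loss w₂ ξ| ≤ 4 * G ^ 2 / (lam * n) := by
  have hn' : (0 : ℝ) < n := by exact_mod_cast hn
  have k1 := key hWconv hconv S w₁ w₂ hw₁mem hw₁spt hw₂mem hw₂spt hw₁min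
  have k2 := key hWconv hconv S' w₂ w₁ hw₂mem hw₂spt hw₁mem hw₁spt hw₂min
  rw [norm_sub_rev w₂ w₁] at k2
  -- difference of empirical risks
  have hdiff : ∀ w : Vec p,
      emp loss S w - emp loss S' w = (n : ℝ)⁻¹ * (loss w (S i₀) - loss w (S' i₀)) := by
    intro w
    unfold emp
    rw [← mul_sub, ← Finset.sum_sub_distrib]
    congr 1
    exact Finset.sum_eq_single_of_mem i₀ (Finset.mem_univ _)
      (fun i _ hi => by rw [hagree i hi]; ring)
  have hb1 : loss w₂ (S i₀) - loss w₁ (S i₀) ≤ G * ‖w₁ - w₂‖ := by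
    have := hlip w₂ w₁ (S i₀)
    rw [norm_sub_rev w₂ w₁] at this
    exact (le_abs_self _).trans this
  have hb2 : loss w₁ (S' i₀) - loss w₂ (S' i₀) ≤ G * ‖w₁ - w₂‖ :=
    (le_abs_self _).trans (hlip w₁ w₂ (S' i₀))
  have hd1 := hdiff w₁
  have hd2 := hdiff w₂
  have hmain : lam / 2 * ‖w₁ - w₂‖ ^ 2 ≤ 2 * G * (n : ℝ)⁻¹ * ‖w₁ - w₂‖ := by
    have hsum : lam / 2 * ‖w₁ - w₂‖ ^ 2 ≤
        (emp loss S w₂ - emp loss S' w₂) + (emp loss S' w₁ - emp loss S w₁) := by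
      linarith
    rw [hd1, hd2] at *
    have hineq : (n : ℝ)⁻¹ * (loss w₂ (S i₀) - loss w₂ (S' i₀)) -
        (n : ℝ)⁻¹ * (loss w₁ (S i₀) - loss w₁ (S' i₀)) ≤ 2 * G * (n : ℝ)⁻¹ * ‖w₁ - w₂‖ := by
      have hnn : (0 : ℝ) ≤ (n : ℝ)⁻¹ := by positivity
      have := mul_le_mul_of_nonneg_left (add_le_add hb1 hb2) hnn
      nlinarith [this]
    -- hsum : lam/2 * ... ≤ (emp S w₂ - emp S' w₂) + (emp S' w₁ - emp S w₁)
    have e1 : (emp loss S w₂ - emp loss S' w₂) + (emp loss S' w₁ - emp loss S w₁)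
        = (n : ℝ)⁻¹ * (loss w₂ (S i₀) - loss w₂ (S' i₀)) -
          (n : ℝ)⁻¹ * (loss w₁ (S i₀) - loss w₁ (S' i₀)) := by
      linarith [hdiff w₁, hdiff w₂]
    linarith
  have hfirst : ‖w₁ - w₂‖ ≤ 4 * G / (lam * n) := by
    rcases eq_or_lt_of_le (norm_nonneg (w₁ - w₂)) with h0 | hpos
    · rw [← h0]; positivity
    · rw [le_div_iff₀ (by positivity)]
      have h5 := mul_le_mul_of_nonneg_right hmain hn'.le
      rw [show 2 * G * (n : ℝ)⁻¹ * ‖w₁ - w₂‖ * (n : ℝ) = 2 * G * ‖w₁ - w₂‖ from by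
        field_simp] at h5
      nlinarith [h5, hpos]
  refine ⟨hfirst, fun ξ => ?_⟩
  calc |loss w₁ ξ - loss w₂ ξ| ≤ G * ‖w₁ - w₂‖ := hlip w₁ w₂ ξ
    _ ≤ G * (4 * G / (lam * n)) := mul_le_mul_of_nonneg_left hfirst hG.le
    _ = 4 * G ^ 2 / (lam * n) := by ring
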